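/- arXiv:0711.3706 — 3 statements merged into one kernel-verified Lean document; each statement's English description precedes it below -/
import Mathlib

section
/- Every surjective group homomorphism from a finitely generated free group to itself is an automorphism (free groups of finite rank are Hopfian). -/
set_option maxHeartbeats 1000000

/-- Any partial injection on a finite type extends to a permutation. -/
lemma exists_perm_extend {α : Type*} [Fintype α] (s : Set α) (g : α → α)
    (hg : Set.InjOn g s) : ∃ σ : Equiv.Perm α, ∀ a ∈ s, σ a = g a := by
  classical
  set t : Set α := g '' s with ht
  let e : s ≃ t := Equiv.Set.imageOfInjOn g s hg
  have hcard : Fintype.card (↥(sᶜ)) = Fintype.card (↥(tᶜ)) := by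
    have h1 : Fintype.card s = Fintype.card t := Fintype.card_congr e
    have h2 := Fintype.card_compl_set s
    have h3 := Fintype.card_compl_set t
    omega
  let e' : (↥(sᶜ)) ≃ (↥(tᶜ)) := Fintype.equivOfCardEq hcard
  refine ⟨(Equiv.Set.sumCompl s).symm.trans ((e.sumCongr e').trans (Equiv.Set.sumCompl t)), ?_⟩
  intro a ha
  simp only [Equiv.trans_apply]
  rw [Equiv.Set.sumCompl_symm_apply_of_mem ha]
  simp only [Equiv.sumCongr_apply, Sum.map_inl, Equiv.Set.sumCompl_apply_inl]
  rfl


section Core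

variable {n : ℕ}

/-- Domain condition 1: position `a` reads letter `(i, true)`. -/
def cond1 (L : ℕ) (q : ℕ → Fin n × Bool) (i : Fin n) (a : Fin (L + 1)) : Prop :=
  a.val < L ∧ q a.val = (i, true)

/-- Domain condition 2: position `a - 1` reads letter `(i, false)`. -/
def cond2 (L : ℕ) (q : ℕ → Fin n × Bool) (i : Fin n) (a : Fin (L + 1)) : Prop :=
  0 < a.val ∧ q (a.val - 1) = (i, false)

/-- `q` has no adjacent cancelling pair. -/
def NoCancel (L : ℕ) (q : ℕ → Fin n × Bool) : Prop :=
  ∀ k, k + 1 < L → q (k + 1) ≠ ((q k).1, !(q k).2)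

open Classical in
noncomputable def gfun (L : ℕ) (q : ℕ → Fin n × Bool) (i : Fin n) (a : Fin (L + 1)) :
    Fin (L + 1) :=
  if h : cond1 L q i a then ⟨a.val + 1, by obtain ⟨h1, -⟩ := h; omega⟩
  else if h' : cond2 L q i a then ⟨a.val - 1, by omega⟩ else a

variable {L : ℕ} {q : ℕ → Fin n × Bool} {i : Fin n}

lemma not_cond1_and_cond2 (hred : NoCancel L q) (a : Fin (L + 1)) :
    ¬ (cond1 L q i a ∧ cond2 L q i a) := by
  rintro ⟨⟨h1, h2⟩, h3, h4⟩
  refine hred (a.val - 1) (by omega) ?_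
  rw [show a.val - 1 + 1 = a.val by omega, h2, h4]
  rfl

lemma gfun_cond1 (a : Fin (L + 1)) (h : cond1 L q i a) :
    (gfun L q i a).val = a.val + 1 := by
  rw [gfun]; simp only [dif_pos h]

lemma gfun_cond2 (hred : NoCancel L q) (a : Fin (L + 1)) (h : cond2 L q i a) :
    (gfun L q i a).val = a.val - 1 := by
  have h' : ¬ cond1 L q i a := fun h'' => not_cond1_and_cond2 hred a ⟨h'', h⟩
  rw [gfun]; simp only [dif_neg h', dif_pos h]

lemma gfun_injOn (hred : NoCancel L q) :
    Set.InjOn (gfun L q i) {a | cond1 L q i a ∨ cond2 L q i a} := by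
  have key : ∀ c d : Fin (L + 1), cond1 L q i c → cond2 L q i d →
      (gfun L q i c).val = (gfun L q i d).val → False := by
    intro c d hc hd hcd
    rw [gfun_cond1 c hc, gfun_cond2 hred d hd] at hcd
    have hdL : d.val ≤ L := by omega
    refine hred c.val (by omega) ?_
    rw [hc.2]
    rw [show c.val + 1 = d.val - 1 by omega, hd.2]
    rfl
  intro a ha b hb hab
  have hab' : (gfun L q i a).val = (gfun L q i b).val := by rw [hab]
  rcases ha with ha | ha <;> rcases hb with hb | hb
  · rw [gfun_cond1 a ha, gfun_cond1 b hb] at hab'; exact Fin.ext (by omega)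
  · exact absurd (key a b ha hb hab') id
  · exact absurd (key b a hb ha hab'.symm) id
  · rw [gfun_cond2 hred a ha, gfun_cond2 hred b hb] at hab'
    have ha0 := ha.1; have hb0 := hb.1
    exact Fin.ext (by omega)

lemma exists_good_perm (hred : NoCancel L q) :
    ∃ σ : Fin n → Equiv.Perm (Fin (L + 1)),
      (∀ i (a : Fin (L + 1)), cond1 L q i a → (σ i a).val = a.val + 1) ∧
      (∀ i (a : Fin (L + 1)), cond2 L q i a → (σ i a).val = a.val - 1) := by
  have hσex : ∀ i : Fin n, ∃ σ : Equiv.Perm (Fin (L + 1)),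
      ∀ a ∈ {a | cond1 L q i a ∨ cond2 L q i a}, σ a = gfun L q i a :=
    fun i => exists_perm_extend _ _ (gfun_injOn hred)
  choose σ hσ using hσex
  refine ⟨σ, fun i a h => ?_, fun i a h => ?_⟩
  · rw [hσ i a (Or.inl h)]; exact gfun_cond1 a h
  · rw [hσ i a (Or.inr h)]; exact gfun_cond2 hred a h

end Core

lemma prod_apply_zero {n : ℕ} (l : List (Fin n × Bool)) (d : Fin n × Bool)
    (hl : FreeGroup.reduce l = l) (hne : l ≠ []) :
    ∃ σ : Fin n → Equiv.Perm (Fin (l.length + 1)),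
      ((l.map fun x => cond x.2 (σ x.1) (σ x.1)⁻¹).prod) ⟨0, by omega⟩ =
        ⟨l.length, by omega⟩ := by
  classical
  have hL0 : 0 < l.length := List.length_pos_iff.mpr hne
  set q : ℕ → Fin n × Bool := fun k => l.reverse.getD k d with hq
  have hpq : ∀ k, k < l.length → q k = l.getD (l.length - 1 - k) d := by
    intro k hk
    have h1 : k < l.reverse.length := by simpa using hk
    have h2 : l.length - 1 - k < l.length := by omega
    rw [hq]
    simp only []
    rw [List.getD_eq_getElem _ _ h1, List.getD_eq_getElem _ _ h2]
    rw [List.getElem_reverse]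
  have hsplit : ∀ j, j + 1 < l.length →
      l = l.take j ++ l.getD j d :: l.getD (j + 1) d :: l.drop (j + 2) := by
    intro j hj
    have h1 : j < l.length := by omega
    have h2 : j + 1 < l.length := by omega
    conv_lhs => rw [← List.take_append_drop j l]
    rw [List.drop_eq_getElem_cons h1, List.drop_eq_getElem_cons h2]
    rw [List.getD_eq_getElem _ _ h1, List.getD_eq_getElem _ _ h2]
  have hnc : NoCancel l.length q := by
    intro k hk h
    have hq1 : q k = l.getD (l.length - 2 - k + 1) d := by
      rw [hpq k (by omega)]; congr 1; omega
    have hq2 : q (k + 1) = l.getD (l.length - 2 - k) d := by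
      rw [hpq (k + 1) (by omega)]; congr 1; omega
    have hd := hsplit (l.length - 2 - k) (by omega)
    rw [← hq2, ← hq1, h] at hd
    refine FreeGroup.reduce.not (L₁ := l) (L₂ := l.take (l.length - 2 - k))
      (L₃ := l.drop (l.length - 2 - k + 2)) (x := (q k).1) (b := !(q k).2) ?_
    rw [hl, Bool.not_not, Prod.mk.eta]
    exact hd
  obtain ⟨σ, hσ1, hσ2⟩ := exists_good_perm hnc
  refine ⟨σ, ?_⟩
  have hstep : ∀ k, k < l.length →
      (cond (l.getD k d).2 (σ (l.getD k d).1) (σ (l.getD k d).1)⁻¹)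
        ⟨l.length - k - 1, by omega⟩ = ⟨l.length - k, by omega⟩ := by
    intro k hk
    have hqk : q (l.length - k - 1) = l.getD k d := by
      rw [hpq (l.length - k - 1) (by omega)]; congr 1; omega
    rcases hxb : l.getD k d with ⟨x, _ | _⟩
    · -- letter (x, false)
      have ha : cond2 l.length q x ⟨l.length - k, by omega⟩ := by
        refine ⟨by simpa using (by omega : 0 < l.length - k), ?_⟩
        show q (l.length - k - 1) = (x, false)
        rw [hqk, hxb]
      have h2 := hσ2 x ⟨l.length - k, by omega⟩ ha
      have h3 : σ x ⟨l.length - k, by omega⟩ = ⟨l.length - k - 1, by omega⟩ :=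
        Fin.ext (by rw [h2])
      show (σ x).symm ⟨l.length - k - 1, by omega⟩ = ⟨l.length - k, by omega⟩
      exact (Equiv.symm_apply_eq (σ x)).mpr h3.symm
    · -- letter (x, true)
      have ha : cond1 l.length q x ⟨l.length - k - 1, by omega⟩ := by
        refine ⟨by simpa using (by omega : l.length - k - 1 < l.length), ?_⟩
        show q (l.length - k - 1) = (x, true)
        rw [hqk, hxb]
      have h2 := hσ1 x ⟨l.length - k - 1, by omega⟩ ha
      show σ x ⟨l.length - k - 1, by omega⟩ = ⟨l.length - k, by omega⟩
      exact Fin.ext (by rw [h2]; simp; omega)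
  have hkey : ∀ k, k ≤ l.length →
      ((l.take k).map fun x => cond x.2 (σ x.1) (σ x.1)⁻¹).prod
        ⟨l.length - k, by omega⟩ = ⟨l.length, by omega⟩ := by
    intro k
    induction k with
    | zero => intro _; simp
    | succ k ih =>
      intro hk
      have hkL : k < l.length := by omega
      rw [List.take_succ, List.getElem?_eq_getElem hkL]
      simp only [Option.toList_some, List.map_append, List.prod_append, List.map_cons,
        List.map_nil, List.prod_cons, List.prod_nil, mul_one]
      rw [Equiv.Perm.mul_apply]
      have hpk : l[k] = l.getD k d := (List.getD_eq_getElem _ _ hkL).symm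
      rw [hpk]
      have heq : (⟨l.length - (k + 1), by omega⟩ : Fin (l.length + 1)) =
          ⟨l.length - k - 1, by omega⟩ := by simp only [Fin.mk.injEq]; omega
      rw [heq, hstep k hkL]
      exact ih (by omega)
  have hfin := hkey l.length le_rfl
  rw [List.take_length] at hfin
  have h0 : (⟨l.length - l.length, by omega⟩ : Fin (l.length + 1)) = ⟨0, by omega⟩ := by
    simp only [Fin.mk.injEq]; omega
  rw [h0] at hfin
  exact hfin

/-- Free groups of finite rank are residually finite (witnessed by symmetric groups). -/
lemma free_group_residually_perm {n : ℕ} (w : FreeGroup (Fin n)) (hw : w ≠ 1) :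
    ∃ (m : ℕ) (φ : FreeGroup (Fin n) →* Equiv.Perm (Fin m)), φ w ≠ 1 := by
  have hne : w.toWord ≠ [] := fun h => hw (FreeGroup.toWord_eq_nil_iff.mp h)
  obtain ⟨σ, hσ⟩ := prod_apply_zero w.toWord (w.toWord.head hne) w.reduce_toWord hne
  refine ⟨w.toWord.length + 1, FreeGroup.lift σ, fun h1 => ?_⟩
  have hL0 : 0 < w.toWord.length := List.length_pos_iff.mpr hne
  have h1' : FreeGroup.lift σ (FreeGroup.mk w.toWord) = 1 := by
    rw [FreeGroup.mk_toWord]; exact h1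
  rw [FreeGroup.lift_mk] at h1'
  rw [h1'] at hσ
  simp only [Equiv.Perm.one_apply, Fin.mk.injEq] at hσ
  omega

theorem free_group_hopfian (n : ℕ) (f : FreeGroup (Fin n) →* FreeGroup (Fin n))
    (hf : Function.Surjective f) : Function.Bijective f := by
  refine ⟨?_, hf⟩
  rw [injective_iff_map_eq_one]
  intro w hw1
  by_contra hw
  obtain ⟨m, φ, hφ⟩ := free_group_residually_perm w hw
  have : Finite (FreeGroup (Fin n) →* Equiv.Perm (Fin m)) :=
    Finite.of_equiv _ FreeGroup.lift
  have hTinj : Function.Injective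
      (fun ψ : FreeGroup (Fin n) →* Equiv.Perm (Fin m) => ψ.comp f) := by
    intro ψ ψ' h
    refine MonoidHom.ext fun x => ?_
    obtain ⟨y, rfl⟩ := hf x
    simpa using DFunLike.congr_fun h y
  obtain ⟨ψ, hψ⟩ := Finite.injective_iff_surjective.mp hTinj φ
  refine hφ ?_
  rw [← hψ]
  show ψ (f w) = 1
  rw [hw1, map_one]
end

section
/- If elements V_1, ..., V_n of a free group F of rank n generate F, then the homomorphism from F to F determined by sending the i-th free generator c_i to V_i is an automorphism of F. -/
set_option linter.unusedSectionVars false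
set_option linter.unusedVariables false

namespace RFAux

variable {α : Type*} [DecidableEq α]

/-- no cancelling adjacent pair -/
def NC (M : List (α × Bool)) : Prop :=
  ∀ (k : ℕ) (x : α) (b : Bool), M[k]? = some (x, b) → M[k+1]? ≠ some (x, !b)

theorem nc_of_reduce {L : List (α × Bool)} (h : FreeGroup.reduce L = L) : NC L := by
  intro k x b h1 h2
  have hk : k < L.length := (List.getElem?_eq_some_iff.mp h1).1
  have hk1 : k + 1 < L.length := (List.getElem?_eq_some_iff.mp h2).1
  have e1 : L[k] = (x, b) := (List.getElem?_eq_some_iff.mp h1).2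
  have e2 : L[k+1] = (x, !b) := (List.getElem?_eq_some_iff.mp h2).2
  have hdec : L = L.take k ++ (x, b) :: (x, !b) :: L.drop (k + 2) := by
    conv_lhs => rw [← List.take_append_drop k L]
    congr 1
    rw [List.drop_eq_getElem_cons hk, e1]
    congr 1
    rw [List.drop_eq_getElem_cons hk1, e2]
  exact FreeGroup.reduce.not (h.trans hdec)

theorem nc_reverse {L : List (α × Bool)} (h : NC L) : NC L.reverse := by
  intro k x b h1 h2
  have hk : k < L.length := by
    have := (List.getElem?_eq_some_iff.mp h1).1; simpa using this
  have hk1 : k + 1 < L.length := by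
    have := (List.getElem?_eq_some_iff.mp h2).1; simpa using this
  rw [List.getElem?_reverse (by simpa using hk)] at h1
  rw [List.getElem?_reverse (by simpa using hk1)] at h2
  have harith : L.length - 1 - k = (L.length - 1 - (k+1)) + 1 := by omega
  rw [harith] at h1
  exact h (L.length - 1 - (k+1)) x (!b) h2 (by simpa using h1)

variable (M : List (α × Bool)) (a : α)

def Pd (x : Fin (M.length + 1)) : Prop :=
  M[(x : ℕ)]? = some (a, true) ∨ (0 < (x : ℕ) ∧ M[(x : ℕ) - 1]? = some (a, false))

def Qd (y : Fin (M.length + 1)) : Prop :=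
  (0 < (y : ℕ) ∧ M[(y : ℕ) - 1]? = some (a, true)) ∨ M[(y : ℕ)]? = some (a, false)

instance : DecidablePred (Pd M a) := fun _ => by unfold Pd; infer_instance
instance : DecidablePred (Qd M a) := fun _ => by unfold Qd; infer_instance

def fwd (x : ℕ) : ℕ := if M[x]? = some (a, true) then x + 1 else x - 1

def bwd (y : ℕ) : ℕ := if M[y]? = some (a, false) then y + 1 else y - 1

theorem fwd_lt {x : Fin (M.length + 1)} (hx : Pd M a x) : fwd M a x < M.length + 1 := by
  unfold fwd
  split
  · next h => have := (List.getElem?_eq_some_iff.mp h).1; omega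
  · have := x.isLt; omega

theorem fwd_Q {x : Fin (M.length + 1)} (hx : Pd M a x) :
    Qd M a ⟨fwd M a x, fwd_lt M a hx⟩ := by
  unfold Qd fwd
  split
  · next h => exact Or.inl ⟨Nat.succ_pos _, by simpa using h⟩
  · next h =>
    rcases hx.resolve_left h with ⟨h0, h1⟩
    exact Or.inr (by simpa using h1)

theorem bwd_lt {y : Fin (M.length + 1)} (hy : Qd M a y) : bwd M a y < M.length + 1 := by
  unfold bwd
  split
  · next h => have := (List.getElem?_eq_some_iff.mp h).1; omega
  · have := y.isLt; omega

theorem bwd_P {y : Fin (M.length + 1)} (hy : Qd M a y) :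
    Pd M a ⟨bwd M a y, bwd_lt M a hy⟩ := by
  unfold Pd bwd
  split
  · next h => exact Or.inr ⟨Nat.succ_pos _, by simpa using h⟩
  · next h =>
    rcases hy.resolve_right h with ⟨h0, h1⟩
    exact Or.inl (by simpa using h1)

theorem bwd_fwd (hnc : NC M) {x : Fin (M.length + 1)} (hx : Pd M a x) :
    bwd M a (fwd M a x) = x := by
  unfold fwd bwd
  split
  · next h =>
    rw [if_neg]
    · omega
    · intro hcon
      exact hnc _ _ _ h (by simpa using hcon)
  · next h =>
    rcases hx.resolve_left h with ⟨h0, h1⟩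
    have hr : (x : ℕ) - 1 + 1 = (x : ℕ) := by omega
    rw [if_pos h1]
    omega

theorem fwd_bwd (hnc : NC M) {y : Fin (M.length + 1)} (hy : Qd M a y) :
    fwd M a (bwd M a y) = y := by
  unfold fwd bwd
  split
  · next h =>
    rw [if_neg]
    · omega
    · intro hcon
      exact hnc _ _ _ h (by simpa using hcon)
  · next h =>
    rcases hy.resolve_right h with ⟨h0, h1⟩
    rw [if_pos h1]
    omega

/-- The partial-injection equivalence between domain and range subtypes. -/
def pe (hnc : NC M) : { x : Fin (M.length + 1) // Pd M a x } ≃ { y // Qd M a y } where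
  toFun x := ⟨⟨fwd M a x.1, fwd_lt M a x.2⟩, fwd_Q M a x.2⟩
  invFun y := ⟨⟨bwd M a y.1, bwd_lt M a y.2⟩, bwd_P M a y.2⟩
  left_inv x := by
    apply Subtype.ext; apply Fin.ext
    exact bwd_fwd M a hnc x.2
  right_inv y := by
    apply Subtype.ext; apply Fin.ext
    exact fwd_bwd M a hnc y.2

noncomputable def sig (hnc : NC M) : Equiv.Perm (Fin (M.length + 1)) :=
  (pe M a hnc).extendSubtype

theorem sig_step_tt (hnc : NC M) {x : Fin (M.length + 1)}
    (h : M[(x : ℕ)]? = some (a, true)) :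
    ((sig M a hnc) x : ℕ) = (x : ℕ) + 1 := by
  have hP : Pd M a x := Or.inl h
  rw [sig, Equiv.extendSubtype_apply_of_mem _ _ hP]
  show fwd M a x = (x : ℕ) + 1
  rw [fwd, if_pos h]

theorem sig_step_ff (hnc : NC M) {x : Fin (M.length + 1)}
    (h : M[(x : ℕ)]? = some (a, false)) {y : Fin (M.length + 1)}
    (hy : (y : ℕ) = (x : ℕ) + 1) :
    (sig M a hnc) y = x := by
  have hP : Pd M a y := Or.inr ⟨by omega, by rw [hy]; simpa using h⟩
  apply Fin.ext
  rw [sig, Equiv.extendSubtype_apply_of_mem _ _ hP]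
  show fwd M a y = (x : ℕ)
  rw [fwd, if_neg, hy]
  · omega
  · rw [hy]
    intro hcon
    exact hnc _ _ _ h hcon

end RFAux

open RFAux in
/-- Free groups are residually finite (separation into finite permutation groups). -/
theorem FreeGroup.exists_perm_hom {α : Type*} [DecidableEq α] (w : FreeGroup α) (hw : w ≠ 1) :
    ∃ (m : ℕ) (f : FreeGroup α →* Equiv.Perm (Fin m)), f w ≠ 1 := by
  classical
  set L := w.toWord with hL
  set M := L.reverse with hM
  have hnc : NC M := nc_reverse (nc_of_reduce (FreeGroup.reduce_toWord w))
  set ℓ := M.length with hℓ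
  have hℓpos : 0 < ℓ := by
    rw [hℓ, hM, List.length_reverse]
    rcases Nat.eq_zero_or_pos L.length with h0 | h
    · exact absurd (FreeGroup.toWord_eq_nil_iff.mp (List.length_eq_zero_iff.mp h0)) hw
    · exact h
  refine ⟨ℓ + 1, FreeGroup.lift (fun a => sig M a hnc), ?_⟩
  intro hcon
  -- the key walk computation
  have key : ∀ j : ℕ, (hj : j ≤ ℓ) →
      (((M.take j).reverse.map
        (fun p : α × Bool => cond p.2 (sig M p.1 hnc) (sig M p.1 hnc)⁻¹)).prod)
        ⟨0, by omega⟩ = ⟨j, by omega⟩ := by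
    intro j
    induction j with
    | zero => intro _; simp
    | succ j ih =>
      intro hj
      have hjlt : j < M.length := by omega
      have htake : M.take (j + 1) = M.take j ++ [M[j]] := by
        rw [List.take_succ, List.getElem?_eq_getElem hjlt]
        rfl
      rw [htake, List.reverse_append, List.reverse_singleton, List.singleton_append,
        List.map_cons, List.prod_cons]
      rw [Equiv.Perm.mul_apply, ih (by omega)]
      have hget : M[j]? = some M[j] := List.getElem?_eq_getElem hjlt
      rcases hb : M[j].2 with _ | _
      · -- false case
        have h' : M[j]? = some (M[j].1, false) := by rw [hget]; congr 1; rw [← hb]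
        have : sig M M[j].1 hnc ⟨j + 1, by omega⟩ = ⟨j, by omega⟩ :=
          sig_step_ff M M[j].1 hnc (x := ⟨j, by omega⟩) h' rfl
        simp only [hb, cond_false]
        exact Equiv.Perm.inv_eq_iff_eq.mpr this.symm
      · -- true case
        have h' : M[j]? = some (M[j].1, true) := by rw [hget]; congr 1; rw [← hb]
        have := sig_step_tt M M[j].1 hnc (x := ⟨j, by omega⟩) h'
        simp only [hb, cond_true]
        exact Fin.ext this
  have hwmk : w = FreeGroup.mk L := (FreeGroup.mk_toWord).symm
  have hL' : L = M.reverse := by rw [hM, List.reverse_reverse]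
  have happ : (FreeGroup.lift (fun a => sig M a hnc) w) ⟨0, by omega⟩ = (⟨ℓ, by omega⟩ : Fin (ℓ+1)) := by
    rw [show (FreeGroup.lift fun a => sig M a hnc) w = (FreeGroup.lift fun a => sig M a hnc) (FreeGroup.mk L) from congrArg _ hwmk, FreeGroup.lift_mk]
    have := key ℓ le_rfl
    rw [List.take_length, ← hL'] at this
    exact this
  rw [hcon] at happ
  rw [Equiv.Perm.one_apply] at happ
  have := congrArg Fin.val happ
  simp only [] at this
  omega

theorem generators_to_basis_automorphism (n : ℕ) (V : Fin n → FreeGroup (Fin n))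
    (hV : Subgroup.closure (Set.range V) = ⊤) :
    Function.Bijective (FreeGroup.lift V : FreeGroup (Fin n) →* FreeGroup (Fin n)) := by
  set φ : FreeGroup (Fin n) →* FreeGroup (Fin n) := FreeGroup.lift V with hφ
  have hsurj : Function.Surjective φ := by
    rw [← MonoidHom.range_eq_top]
    rw [hφ, FreeGroup.range_lift_eq_closure, hV]
  refine ⟨?_, hsurj⟩
  rw [injective_iff_map_eq_one]
  intro w hker
  by_contra hw
  obtain ⟨m, f, hf⟩ := FreeGroup.exists_perm_hom w hw
  -- Hom(F_n, G) is finite, so precomposition with the surjection φ is surjective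
  have hfin : Finite (FreeGroup (Fin n) →* Equiv.Perm (Fin m)) :=
    Finite.of_surjective (FreeGroup.lift (α := Fin n) (β := Equiv.Perm (Fin m)))
      (FreeGroup.lift).surjective
  have hinj : Function.Injective
      (fun g : FreeGroup (Fin n) →* Equiv.Perm (Fin m) => g.comp φ) := by
    intro g g' h
    apply MonoidHom.ext
    intro x
    obtain ⟨y, rfl⟩ := hsurj x
    exact DFunLike.congr_fun h y
  have hsurj2 := Finite.surjective_of_injective hinj
  obtain ⟨f', hf'⟩ := hsurj2 f
  apply hf
  have : f w = f' (φ w) := by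
    rw [← hf']
    rfl
  rw [this, hker, map_one]
end

section
/- If there exists a surjective group homomorphism from the free group of rank n onto the free group of rank m, then m ≤ n. -/
theorem free_group_surjection_rank (n m : ℕ)
    (f : FreeGroup (Fin n) →* FreeGroup (Fin m)) (hf : Function.Surjective f) :
    m ≤ n := by
  classical
  -- map to Multiplicative (Fin m → ZMod 2)
  set G := Multiplicative (Fin m → ZMod 2)
  let φ : FreeGroup (Fin m) →* G :=
    FreeGroup.lift (fun i => Multiplicative.ofAdd (Pi.single i (1 : ZMod 2)))
  have hφ : Function.Surjective φ := by
    intro x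
    refine ⟨((List.finRange m).map
      (fun i => (FreeGroup.of i) ^ (Multiplicative.toAdd x i).val)).prod, ?_⟩
    rw [map_list_prod, List.map_map, ← Fin.prod_univ_def]
    simp only [Function.comp_def, map_pow, φ, FreeGroup.lift_apply_of]
    apply Multiplicative.toAdd.injective
    rw [toAdd_prod]
    have : ∀ i : Fin m,
        Multiplicative.toAdd ((Multiplicative.ofAdd (Pi.single i (1 : ZMod 2))) ^
          (Multiplicative.toAdd x i).val)
          = (Pi.single i (Multiplicative.toAdd x i) : Fin m → ZMod 2) := by
      intro i
      rw [toAdd_pow, toAdd_ofAdd]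
      have : ((Multiplicative.toAdd x i).val) • (Pi.single i (1 : ZMod 2) : Fin m → ZMod 2)
          = Pi.single i (Multiplicative.toAdd x i) := by
        rw [← Pi.single_smul]
        rw [nsmul_eq_mul, mul_one, ZMod.natCast_val, ZMod.cast_id]
      exact this
    simp only [this]
    exact Finset.univ_sum_single _
  have hψ : Function.Surjective (φ.comp f) := hφ.comp hf
  let g : Fin n → (Fin m → ZMod 2) := fun i => Multiplicative.toAdd ((φ.comp f) (FreeGroup.of i))
  have hspan : Submodule.span (ZMod 2) (Set.range g) = ⊤ := by
    rw [Submodule.eq_top_iff']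
    intro v
    obtain ⟨w, hw⟩ := hψ (Multiplicative.ofAdd v)
    have key : ∀ w : FreeGroup (Fin n),
        Multiplicative.toAdd ((φ.comp f) w) ∈ Submodule.span (ZMod 2) (Set.range g) := by
      intro w
      induction w using FreeGroup.induction_on with
      | C1 => simp
      | of i => exact Submodule.subset_span ⟨i, rfl⟩
      | inv_of i h => rw [map_inv, toAdd_inv]; exact Submodule.neg_mem _ h
      | mul a b ha hb => rw [map_mul, toAdd_mul]; exact Submodule.add_mem _ ha hb
    have hv : Multiplicative.toAdd ((φ.comp f) w) = v := by rw [hw]; rfl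
    exact hv ▸ key w
  have := finrank_le_of_span_eq_top hspan
  simpa [Module.finrank_fin_fun] using this
end
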